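/- Define g : ℝ² → ℝ by g(y) = ‖y‖/(‖y‖−1) + (‖y‖−1)/‖y‖ if 1 < ‖y‖ < 2 and g(y) = 0 otherwise. Then: (a) ∫_{ℝ²} g dm = ∞ (g is not Lebesgue integrable); and (b) there is a constant C > 0 such that λ · m({y ∈ ℝ² : g(y) > λ}) ≤ C for every λ > 0 (g belongs to weak-L¹). -/

import Mathlib

open MeasureTheory Set Metric Real

lemma annulus_vol' (s : ℝ) (hs : 1 < s) :
    volume {y : EuclideanSpace ℝ (Fin 2) | 1 < ‖y‖ ∧ ‖y‖ < s}
      = ENNReal.ofReal (Real.pi * (s ^ 2 - 1)) := by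
  have hset : {y : EuclideanSpace ℝ (Fin 2) | 1 < ‖y‖ ∧ ‖y‖ < s}
      = Metric.ball 0 s \ Metric.closedBall 0 1 := by
    ext y
    simp only [mem_setOf_eq, mem_diff, mem_ball_zero_iff, mem_closedBall_zero_iff, not_le]
    tauto
  have hball : volume (Metric.ball (0 : EuclideanSpace ℝ (Fin 2)) s)
      = ENNReal.ofReal (Real.pi * s ^ 2) := by
    rw [EuclideanSpace.volume_ball]
    simp only [Fintype.card_fin]
    norm_num [Real.Gamma_two, Real.sq_sqrt Real.pi_nonneg]
    rw [← ENNReal.ofReal_pow (by linarith), ← ENNReal.ofReal_mul (by positivity)]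
    ring_nf
  have hcb : volume (Metric.closedBall (0 : EuclideanSpace ℝ (Fin 2)) 1)
      = ENNReal.ofReal Real.pi := by
    rw [EuclideanSpace.volume_closedBall]
    simp only [Fintype.card_fin]
    norm_num [Real.Gamma_two, Real.sq_sqrt Real.pi_nonneg]
  rw [hset, measure_diff (Metric.closedBall_subset_ball hs)
      measurableSet_closedBall.nullMeasurableSet (by rw [hcb]; exact ENNReal.ofReal_ne_top),
    hball, hcb, ← ENNReal.ofReal_sub _ Real.pi_nonneg]
  ring_nf

-- divergence of ∫ 1/t on Ioi 1
lemma div_lintegral_top : ∫⁻ t in Ioi (1:ℝ), ENNReal.ofReal (2 * Real.pi / t) = ⊤ := by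
  by_contra h
  have hmeas : Measurable fun t : ℝ => 2 * Real.pi / t := by
    exact measurable_const.div measurable_id
  have hint : IntegrableOn (fun t : ℝ => 2 * Real.pi / t) (Ioi 1) := by
    refine ⟨hmeas.aestronglyMeasurable, ?_⟩
    rw [HasFiniteIntegral]
    have heq : ∀ᵐ t ∂(volume.restrict (Ioi (1:ℝ))),
        ‖2 * Real.pi / t‖ₑ = ENNReal.ofReal (2 * Real.pi / t) := by
      filter_upwards [ae_restrict_mem measurableSet_Ioi] with t ht
      have ht0 : (0:ℝ) < t := lt_trans one_pos ht
      exact Real.enorm_eq_ofReal (by positivity)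
    rw [lintegral_congr_ae heq]
    exact lt_top_iff_ne_top.mpr h
  have h2 : IntegrableOn (fun t : ℝ => t ^ (-1 : ℝ)) (Ioi (1:ℝ)) := by
    have h3 : IntegrableOn (fun t : ℝ => (2 * Real.pi)⁻¹ * (2 * Real.pi / t)) (Ioi (1:ℝ)) :=
      hint.const_mul (2 * Real.pi)⁻¹
    refine h3.congr_fun (fun t ht => ?_) measurableSet_Ioi
    have ht0 : (0:ℝ) < t := lt_trans one_pos ht
    rw [Real.rpow_neg_one]
    field_simp
  rw [integrableOn_Ioi_rpow_iff one_pos] at h2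
  linarith

theorem cloaking_trace_weak_L1_not_L1
    (g : EuclideanSpace ℝ (Fin 2) → ℝ)
    (hg : ∀ y : EuclideanSpace ℝ (Fin 2),
      g y = if 1 < ‖y‖ ∧ ‖y‖ < 2 then ‖y‖ / (‖y‖ - 1) + (‖y‖ - 1) / ‖y‖ else 0) :
    (∫⁻ y : EuclideanSpace ℝ (Fin 2), ENNReal.ofReal (g y) = ⊤) ∧
    ∃ C : ℝ, 0 < C ∧ ∀ l : ℝ, 0 < l →
      ENNReal.ofReal l * volume {y : EuclideanSpace ℝ (Fin 2) | l < g y}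
        ≤ ENNReal.ofReal C := by
  have hgfun : g = fun y => if 1 < ‖y‖ ∧ ‖y‖ < 2 then ‖y‖ / (‖y‖ - 1) + (‖y‖ - 1) / ‖y‖ else 0 :=
    funext hg
  have hmg : Measurable g := by
    rw [hgfun]
    exact Measurable.ite
      ((measurableSet_lt measurable_const measurable_norm).inter
        (measurableSet_lt measurable_norm measurable_const))
      ((measurable_norm.div (measurable_norm.sub measurable_const)).add
        ((measurable_norm.sub measurable_const).div measurable_norm))
      measurable_const
  have hg_nn : ∀ y, 0 ≤ g y := by
    intro y
    rw [hg y]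
    split_ifs with h
    · obtain ⟨h1, _⟩ := h
      have h0 : (0:ℝ) < ‖y‖ := lt_trans one_pos h1
      apply add_nonneg <;> apply div_nonneg <;> linarith
    · exact le_refl 0
  constructor
  · -- part (a)
    rw [lintegral_eq_lintegral_meas_lt volume (Filter.Eventually.of_forall hg_nn)
        hmg.aemeasurable]
    rw [eq_top_iff, ← div_lintegral_top]
    calc ∫⁻ t in Ioi (1:ℝ), ENNReal.ofReal (2 * Real.pi / t)
        ≤ ∫⁻ t in Ioi (1:ℝ), volume {y : EuclideanSpace ℝ (Fin 2) | t < g y} := by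
          refine setLIntegral_mono' measurableSet_Ioi (fun t ht => ?_)
          rw [mem_Ioi] at ht
          have ht0 : (0:ℝ) < t := lt_trans one_pos ht
          have hsub : {y : EuclideanSpace ℝ (Fin 2) | 1 < ‖y‖ ∧ ‖y‖ < 1 + 1/t}
              ⊆ {y : EuclideanSpace ℝ (Fin 2) | t < g y} := by
            intro y hy
            obtain ⟨h1, h2⟩ := hy
            set r := ‖y‖
            have hr1 : (0:ℝ) < r - 1 := by linarith
            have hr2 : r < 2 := by
              have : 1/t < 1 := by rw [div_lt_one ht0]; exact ht
              linarith
            have hkey : t * (r - 1) < 1 := by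
              have := mul_lt_mul_of_pos_left (show r - 1 < 1/t by linarith) ht0
              rwa [mul_one_div, div_self (ne_of_gt ht0)] at this
            rw [mem_setOf_eq, hg y, if_pos ⟨h1, hr2⟩]
            rw [div_add_div _ _ (ne_of_gt hr1) (by positivity : r ≠ 0),
              lt_div_iff₀ (by positivity)]
            nlinarith [mul_pos hr1 (show (0:ℝ) < r by linarith)]
          calc ENNReal.ofReal (2 * Real.pi / t)
              ≤ ENNReal.ofReal (Real.pi * ((1 + 1/t)^2 - 1)) := by
                apply ENNReal.ofReal_le_ofReal
                have h1 : (1 + 1/t)^2 - 1 = 2/t + 1/t^2 := by field_simp; ring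
                rw [h1]
                have : (0:ℝ) ≤ Real.pi * (1/t^2) := by positivity
                have h2 : 2 * Real.pi / t = Real.pi * (2/t) := by ring
                rw [h2, mul_add]
                linarith
            _ = volume {y : EuclideanSpace ℝ (Fin 2) | 1 < ‖y‖ ∧ ‖y‖ < 1 + 1/t} :=
                (annulus_vol' _ (lt_add_of_pos_right 1 (by positivity))).symm
            _ ≤ volume {y : EuclideanSpace ℝ (Fin 2) | t < g y} := measure_mono hsub
      _ ≤ ∫⁻ t in Ioi (0:ℝ), volume {y : EuclideanSpace ℝ (Fin 2) | t < g y} :=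
          lintegral_mono' (Measure.restrict_mono (Ioi_subset_Ioi (by norm_num)) le_rfl) le_rfl
  · -- part (b)
    refine ⟨12 * Real.pi, by positivity, fun l hl => ?_⟩
    set m := min 2 (1 + 3/l) with hm
    have hm1 : 1 < m := lt_min one_lt_two (lt_add_of_pos_right 1 (by positivity))
    have hsub : {y : EuclideanSpace ℝ (Fin 2) | l < g y}
        ⊆ {y : EuclideanSpace ℝ (Fin 2) | 1 < ‖y‖ ∧ ‖y‖ < m} := by
      intro y hy
      rw [mem_setOf_eq, hg y] at hy
      split_ifs at hy with h
      · obtain ⟨h1, h2⟩ := h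
        set r := ‖y‖
        refine ⟨h1, lt_min h2 ?_⟩
        have hr1 : (0:ℝ) < r - 1 := by linarith
        have hr0 : (0:ℝ) < r := by linarith
        -- g y ≤ 3/(r-1)
        have hb : r / (r-1) + (r-1)/r ≤ 3 / (r-1) := by
          rw [div_add_div _ _ (ne_of_gt hr1) (ne_of_gt hr0),
            div_le_div_iff₀ (by positivity) hr1]
          nlinarith [mul_pos hr1 (mul_pos hr1 hr0), sq_nonneg (r-1), hr1, h2,
            mul_pos hr1 (mul_pos (sub_pos.mpr h1) (show (0:ℝ) < 3 - r by linarith))]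
        have hlt : (r - 1) * l < 3 := by
          have h4 := lt_of_lt_of_le hy hb
          rw [lt_div_iff₀ hr1] at h4
          linarith
        have h5 : r - 1 < 3 / l := (lt_div_iff₀ hl).mpr hlt
        linarith
      · linarith
    calc ENNReal.ofReal l * volume {y : EuclideanSpace ℝ (Fin 2) | l < g y}
        ≤ ENNReal.ofReal l * ENNReal.ofReal (Real.pi * (m^2 - 1)) := by
          exact mul_le_mul_right (le_of_eq_of_le (congrArg _ rfl)
            ((measure_mono hsub).trans_eq (annulus_vol' m hm1))) _
      _ = ENNReal.ofReal (l * (Real.pi * (m^2 - 1))) :=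
          (ENNReal.ofReal_mul hl.le).symm
      _ ≤ ENNReal.ofReal (12 * Real.pi) := by
          apply ENNReal.ofReal_le_ofReal
          have hc : l * (m^2 - 1) ≤ 9 := by
            rcases le_total l 3 with h3 | h3
            · have hm2 : m ≤ 2 := min_le_left _ _
              have hA : m^2 - 1 ≤ 3 := by nlinarith
              have hB := mul_le_mul_of_nonneg_left hA hl.le
              linarith
            · have hm2 : m ≤ 1 + 3/l := min_le_right _ _
              have hl3 : 3 / l ≤ 1 := by rw [div_le_one hl]; linarith
              have h9 : m^2 - 1 ≤ 9 / l := by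
                have hsq : m^2 ≤ (1 + 3/l)^2 := by nlinarith [hm1]
                have e : (1+3/l)^2 - 1 = 6/l + (3/l)*(3/l) := by ring
                nlinarith [mul_le_of_le_one_right (show (0:ℝ) ≤ 3/l by positivity) hl3,
                  show (6:ℝ)/l + 3/l = 9/l by ring]
              have h99 : l * (9 / l) = 9 := by field_simp
              calc l * (m^2 - 1) ≤ l * (9/l) := by
                    exact mul_le_mul_of_nonneg_left h9 hl.le
                _ = 9 := h99
          calc l * (Real.pi * (m^2 - 1)) = Real.pi * (l * (m^2 - 1)) := by ring
            _ ≤ Real.pi * 12 := mul_le_mul_of_nonneg_left (by linarith) Real.pi_pos.le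
            _ = 12 * Real.pi := by ring
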